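/- Empirical discrepancy bound (equation (25) in the proof of Theorem 3.1). Let S be a nonempty finite tuple of points of Z and let G = (u₁,…,u_g) be a nonempty finite tuple of points of Z such that every entry of G lies in ⋃_{i ∈ T_S} Zᵢ. For i ∈ T_S write Gᵢ for the subtuple of G lying in Zᵢ and gᵢ = |Gᵢ|, and assume gᵢ > 0 for every i ∈ T_S. Then Σ_{i ∈ T_S} (gᵢ/g) · F(Sᵢ) − F(G) ≤ L · Σ_{i ∈ T_S} (gᵢ/g) · d̄(Gᵢ, Sᵢ). -/

import Mathlib

open MeasureTheory ProbabilityTheory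

open Classical in
/-- The set of indices of the entries of the tuple `S` that lie in the region `A`. -/
noncomputable def idxIn {Z : Type*} {m : ℕ} (S : Fin m → Z) (A : Set Z) : Finset (Fin m) :=
  Finset.univ.filter fun j => S j ∈ A

open Classical in
/-- `T_S`: the set of indices `i` of regions `Zpart i` containing at least one entry of `S`. -/
noncomputable def TS {Z : Type*} {K m : ℕ} (Zpart : Fin K → Set Z) (S : Fin m → Z) :
    Finset (Fin K) :=
  Finset.univ.filter fun i => (idxIn S (Zpart i)).Nonempty

/-- Empirical loss of `ℓ` on the subtuple of `S` indexed by `B`. -/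
noncomputable def empLoss {Z : Type*} {m : ℕ} (ℓ : Z → ℝ) (S : Fin m → Z)
    (B : Finset (Fin m)) : ℝ :=
  (B.card : ℝ)⁻¹ * ∑ j ∈ B, ℓ (S j)

/-- Local robustness `R(s, A | P) = E_{z∼P}[‖h z − h s‖ | z ∈ A]`. -/
noncomputable def locRob {Z : Type*} [MeasurableSpace Z] {H : Type*} [NormedAddCommGroup H]
    (h : Z → H) (P : Measure Z) (A : Set Z) (s : Z) : ℝ :=
  ∫ z, ‖h z - h s‖ ∂(P[|A])

/-- Local robustness of the subtuple of `S` indexed by `B`: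
`R(S_B, A | P) = (1/|B|) ∑_{j∈B} R(S j, A | P)`. -/
noncomputable def tupRob {Z : Type*} [MeasurableSpace Z] {H : Type*} [NormedAddCommGroup H]
    (h : Z → H) (P : Measure Z) (A : Set Z) {m : ℕ} (S : Fin m → Z) (B : Finset (Fin m)) : ℝ :=
  (B.card : ℝ)⁻¹ * ∑ j ∈ B, locRob h P A (S j)

/-- `h`-based discrepancy `d̄(G_{BG}, S_{BS})` between the subtuple of `G` indexed by `BG`
and the subtuple of `S` indexed by `BS`. -/
noncomputable def disc {Z : Type*} {H : Type*} [NormedAddCommGroup H] (h : Z → H)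
    {k m : ℕ} (G : Fin k → Z) (BG : Finset (Fin k)) (S : Fin m → Z) (BS : Finset (Fin m)) : ℝ :=
  ((BG.card : ℝ) * (BS.card : ℝ))⁻¹ * ∑ u ∈ BG, ∑ s ∈ BS, ‖h (S s) - h (G u)‖

theorem empirical_discrepancy_bound {Z : Type*} [MeasurableSpace Z]
    {H : Type*} [NormedAddCommGroup H] [NormedSpace ℝ H]
    (K : ℕ) (hK : 1 ≤ K) (Zpart : Fin K → Set Z)
    (hZmeas : ∀ i, MeasurableSet (Zpart i))
    (hZne : ∀ i, (Zpart i).Nonempty)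
    (hZdisj : Pairwise (Function.onFun Disjoint Zpart))
    (hZcover : ⋃ i, Zpart i = Set.univ)
    (h : Z → H) (ℓ : Z → ℝ) (L : ℝ)
    (hLip : ∀ s u, |ℓ s - ℓ u| ≤ L * ‖h s - h u‖)
    (m g : ℕ) (hm : 1 ≤ m) (hg : 1 ≤ g) (S : Fin m → Z) (G : Fin g → Z)
    (hG : ∀ j, G j ∈ ⋃ i ∈ TS Zpart S, Zpart i)
    (hGi : ∀ i ∈ TS Zpart S, 0 < (idxIn G (Zpart i)).card) :
    ∑ i ∈ TS Zpart S,
        ((idxIn G (Zpart i)).card : ℝ) / (g : ℝ) * empLoss ℓ S (idxIn S (Zpart i))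
      - empLoss ℓ G Finset.univ
    ≤ L * ∑ i ∈ TS Zpart S,
        ((idxIn G (Zpart i)).card : ℝ) / (g : ℝ)
          * disc h G (idxIn G (Zpart i)) S (idxIn S (Zpart i)) := by
  classical
  set T := TS Zpart S with hT
  have hgpos : (0:ℝ) < g := by exact_mod_cast hg
  -- the index sets of G partition Fin g
  have hdisjF : (↑T : Set (Fin K)).PairwiseDisjoint (fun i => idxIn G (Zpart i)) := by
    intro i _ i' _ hne
    simp only [Function.onFun]
    rw [Finset.disjoint_left]
    intro j hj hj'
    simp only [idxIn, Finset.mem_filter] at hj hj'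
    exact (hZdisj hne).le_bot ⟨hj.2, hj'.2⟩
  have hcover : (Finset.univ : Finset (Fin g)) = T.biUnion (fun i => idxIn G (Zpart i)) := by
    ext j
    simp only [Finset.mem_univ, Finset.mem_biUnion, true_iff]
    have := hG j
    simp only [Set.mem_iUnion] at this
    obtain ⟨i, hi, hmem⟩ := this
    exact ⟨i, hi, by simp [idxIn, hmem]⟩
  have hsplit : ∑ j : Fin g, ℓ (G j) = ∑ i ∈ T, ∑ j ∈ idxIn G (Zpart i), ℓ (G j) := by
    rw [hcover, Finset.sum_biUnion hdisjF]
  have hFG : empLoss ℓ G Finset.univ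
      = ∑ i ∈ T, ((idxIn G (Zpart i)).card : ℝ) / (g : ℝ) * empLoss ℓ G (idxIn G (Zpart i)) := by
    unfold empLoss
    rw [Finset.card_univ, Fintype.card_fin, hsplit, Finset.mul_sum]
    refine Finset.sum_congr rfl fun i hi => ?_
    have hb : ((idxIn G (Zpart i)).card : ℝ) ≠ 0 := by
      exact_mod_cast (hGi i hi).ne'
    field_simp
  rw [hFG, ← Finset.sum_sub_distrib, Finset.mul_sum]
  refine Finset.sum_le_sum fun i hi => ?_
  have hc : (0:ℝ) ≤ ((idxIn G (Zpart i)).card : ℝ) / (g : ℝ) := by positivity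
  suffices hmain : empLoss ℓ S (idxIn S (Zpart i)) - empLoss ℓ G (idxIn G (Zpart i))
      ≤ L * disc h G (idxIn G (Zpart i)) S (idxIn S (Zpart i)) by
    calc ((idxIn G (Zpart i)).card : ℝ) / (g : ℝ) * empLoss ℓ S (idxIn S (Zpart i))
          - ((idxIn G (Zpart i)).card : ℝ) / (g : ℝ) * empLoss ℓ G (idxIn G (Zpart i))
        = ((idxIn G (Zpart i)).card : ℝ) / (g : ℝ)
            * (empLoss ℓ S (idxIn S (Zpart i)) - empLoss ℓ G (idxIn G (Zpart i))) := by ring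
      _ ≤ ((idxIn G (Zpart i)).card : ℝ) / (g : ℝ)
            * (L * disc h G (idxIn G (Zpart i)) S (idxIn S (Zpart i))) :=
          mul_le_mul_of_nonneg_left hmain hc
      _ = L * (((idxIn G (Zpart i)).card : ℝ) / (g : ℝ)
            * disc h G (idxIn G (Zpart i)) S (idxIn S (Zpart i))) := by ring
  -- per-region bound
  have hia : (idxIn S (Zpart i)).Nonempty := by
    have := hi
    simp only [hT, TS, Finset.mem_filter] at this
    exact this.2
  have ha : (0:ℝ) < (idxIn S (Zpart i)).card := by exact Nat.cast_pos.mpr (Finset.card_pos.mpr hia)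
  have hb : (0:ℝ) < (idxIn G (Zpart i)).card := by exact_mod_cast hGi i hi
  set BS := idxIn S (Zpart i)
  set BG := idxIn G (Zpart i)
  set a : ℝ := (BS.card : ℝ)
  set b : ℝ := (BG.card : ℝ)
  have key : ∑ u ∈ BG, ∑ s ∈ BS, (ℓ (S s) - ℓ (G u))
      ≤ ∑ u ∈ BG, ∑ s ∈ BS, L * ‖h (S s) - h (G u)‖ := by
    refine Finset.sum_le_sum fun u _ => Finset.sum_le_sum fun s _ => ?_
    exact (le_abs_self _).trans (hLip (S s) (G u))
  have hdiff : empLoss ℓ S BS - empLoss ℓ G BG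
      = (b * a)⁻¹ * ∑ u ∈ BG, ∑ s ∈ BS, (ℓ (S s) - ℓ (G u)) := by
    unfold empLoss
    have : ∑ u ∈ BG, ∑ s ∈ BS, (ℓ (S s) - ℓ (G u))
        = b * ∑ s ∈ BS, ℓ (S s) - a * ∑ u ∈ BG, ℓ (G u) := by
      simp only [Finset.sum_sub_distrib, Finset.sum_const, nsmul_eq_mul]
      rw [← Finset.mul_sum]
    rw [this]
    field_simp
    rw [show (BS.card:ℝ) = a from rfl, show (BG.card:ℝ) = b from rfl, sub_mul, div_mul_cancel₀ _ hb.ne']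
    ring
  have hdisc : L * disc h G BG S BS
      = (b * a)⁻¹ * ∑ u ∈ BG, ∑ s ∈ BS, L * ‖h (S s) - h (G u)‖ := by
    unfold disc
    simp only [← Finset.mul_sum]
    ring
  rw [hdiff, hdisc]
  exact mul_le_mul_of_nonneg_left key (by positivity)
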